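/- Define the sesquilinear form B(h,k) = (1/2)( ∫₀¹ conj(h(x)) k(x) dx + ∫₀¹ conj(h'(x)) k'(x) dx ) + (1/2)( conj(h(0)) k(0) + conj(h(1)) k(1) ) for continuously differentiable h, k : [0,1] → ℂ. Fix θ ∈ ℝ and suppose λ, μ ∈ ℝ with λ ≠ μ satisfy (1 + iλ) e^{iλ} = e^{iθ}(1 − iλ) and (1 + iμ) e^{iμ} = e^{iθ}(1 − iμ). Then B(e_λ, e_μ) = 0, where e_λ(x) = e^{iλx} and e_μ(x) = e^{iμx}. (Thus distinct eigenvalues of the selfadjoint extension A_θ give orthogonal exponentials in the RKHS H_F of F(x) = e^{−|x|}.) -/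
import Mathlib


open MeasureTheory ComplexConjugate

lemma stmt_12_hd (a x : ℝ) : HasDerivAt (fun t : ℝ => Complex.exp (Complex.I * a * t))
    (Complex.I * a * Complex.exp (Complex.I * a * x)) x := by
  have h1 : HasDerivAt (fun t : ℝ => Complex.I * a * (t : ℂ)) (Complex.I * a) x := by
    simpa using (Complex.ofRealCLM.hasDerivAt (x := x)).const_mul (Complex.I * a)
  simpa [mul_comm] using h1.cexp

theorem stmt_12 (θ lam mu : ℝ) (hne : lam ≠ mu)
    (hlam : (1 + Complex.I * lam) * Complex.exp (Complex.I * lam) =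
      Complex.exp (Complex.I * θ) * (1 - Complex.I * lam))
    (hmu : (1 + Complex.I * mu) * Complex.exp (Complex.I * mu) =
      Complex.exp (Complex.I * θ) * (1 - Complex.I * mu)) :
    (1/2 : ℂ) * ((∫ x in (0:ℝ)..1,
        conj (Complex.exp (Complex.I * lam * x)) * Complex.exp (Complex.I * mu * x)) +
      (∫ x in (0:ℝ)..1,
        conj (deriv (fun t : ℝ => Complex.exp (Complex.I * lam * t)) x) *
          deriv (fun t : ℝ => Complex.exp (Complex.I * mu * t)) x)) +
    (1/2 : ℂ) * (conj (Complex.exp (Complex.I * lam * ((0:ℝ):ℂ))) *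
        Complex.exp (Complex.I * mu * ((0:ℝ):ℂ)) +
      conj (Complex.exp (Complex.I * lam * ((1:ℝ):ℂ))) *
        Complex.exp (Complex.I * mu * ((1:ℝ):ℂ))) = 0 := by
  set c : ℂ := Complex.I * ((mu : ℂ) - lam) with hc_def
  have hml : (mu : ℂ) ≠ (lam : ℂ) := by exact_mod_cast hne.symm
  have hc : c ≠ 0 := mul_ne_zero Complex.I_ne_zero (sub_ne_zero.mpr hml)
  have hbase : ∀ x : ℝ,
      conj (Complex.exp (Complex.I * lam * x)) * Complex.exp (Complex.I * mu * x)
        = Complex.exp (c * x) := by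
    intro x
    rw [← Complex.exp_conj, ← Complex.exp_add]
    congr 1
    simp only [map_mul, Complex.conj_I, Complex.conj_ofReal, hc_def]
    ring
  have hI1 : (∫ x in (0:ℝ)..1,
      conj (Complex.exp (Complex.I * lam * x)) * Complex.exp (Complex.I * mu * x))
      = (Complex.exp c - 1) / c := by
    rw [intervalIntegral.integral_congr (fun x _ => hbase x), integral_exp_mul_complex hc]
    norm_num
  have hI2 : (∫ x in (0:ℝ)..1,
      conj (deriv (fun t : ℝ => Complex.exp (Complex.I * lam * t)) x) *
        deriv (fun t : ℝ => Complex.exp (Complex.I * mu * t)) x)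
      = (lam * mu : ℂ) * ((Complex.exp c - 1) / c) := by
    rw [intervalIntegral.integral_congr (g := fun x : ℝ =>
      (lam * mu : ℂ) * Complex.exp (c * x)) ?_]
    · rw [intervalIntegral.integral_const_mul, integral_exp_mul_complex hc]
      norm_num
    · intro x _
      simp only
      rw [(stmt_12_hd lam x).deriv, (stmt_12_hd mu x).deriv]
      simp only [map_mul, Complex.conj_I, Complex.conj_ofReal]
      rw [← hbase x]
      linear_combination (-(lam:ℂ) * mu * (starRingEnd ℂ) (Complex.exp (Complex.I * lam * x)) *
        Complex.exp (Complex.I * mu * x)) * Complex.I_sq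
  rw [hI1, hI2, hbase 1]
  have hexpc : Complex.exp c = Complex.exp (Complex.I * mu) * (Complex.exp (Complex.I * lam))⁻¹ := by
    rw [← Complex.exp_neg, ← Complex.exp_add]
    congr 1; rw [hc_def]; ring
  have key : Complex.exp (Complex.I * mu) * ((1 - Complex.I * lam) * (1 + Complex.I * mu))
      = Complex.exp (Complex.I * lam) * ((1 + Complex.I * lam) * (1 - Complex.I * mu)) := by
    linear_combination (1 - Complex.I * lam) * hmu - (1 - Complex.I * mu) * hlam
  have he1 : Complex.exp (Complex.I * (lam : ℂ)) ≠ 0 := Complex.exp_ne_zero _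
  have key2 : Complex.exp c * ((1 - Complex.I * lam) * (1 + Complex.I * mu))
      = (1 + Complex.I * lam) * (1 - Complex.I * mu) := by
    rw [hexpc]
    field_simp
    linear_combination key
  simp only [Complex.ofReal_zero, Complex.ofReal_one, mul_zero, mul_one, Complex.exp_zero,
    map_one, one_mul]
  rw [hc_def] at key2 ⊢
  have hc' : Complex.I * ((mu : ℂ) - lam) ≠ 0 := hc_def ▸ hc
  have h3 : (Complex.exp (Complex.I * ((mu : ℂ) - lam)) - 1) * (1 + (lam : ℂ) * mu)
      = -(1 + Complex.exp (Complex.I * ((mu : ℂ) - lam))) * (Complex.I * ((mu : ℂ) - lam)) := by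
    linear_combination key2 + ((lam : ℂ) * mu *
      (Complex.exp (Complex.I * ((mu : ℂ) - lam)) - 1)) * Complex.I_sq
  have hA : (Complex.exp (Complex.I * ((mu : ℂ) - lam)) - 1) / (Complex.I * ((mu : ℂ) - lam))
      * (1 + (lam : ℂ) * mu) = -(1 + Complex.exp (Complex.I * ((mu : ℂ) - lam))) := by
    rw [div_mul_eq_mul_div, h3, neg_mul, neg_div, mul_div_assoc, div_self hc', mul_one]
  linear_combination (1 / 2 : ℂ) * hA
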